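/- Let V be an N×N complex unitary matrix and let λ_f ∈ ℂ^N have pairwise distinct entries. Define the dual shift S_f = V^H diag(λ_f) V. Then for every window vector w ∈ ℂ^N there exist coefficients h_{f,0}, …, h_{f,N−1} ∈ ℂ such that V^H diag(w) V = Σ_{l=0}^{N−1} h_{f,l} (S_f)^l. Consequently, for every graph signal x ∈ ℂ^N, the GFT of the windowed signal diag(w)x equals the polynomial filter in S_f applied to the GFT of x: V^H (diag(w) x) = (Σ_{l=0}^{N−1} h_{f,l} (S_f)^l) (V^H x). -/

import Mathlib

open Matrix

/-- Corollary 1: windowing in the vertex domain is filtering with a polynomial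
of the dual shift `S_f = Vᴴ diag(λ_f) V` in the frequency domain. -/
theorem windowing_is_dual_filtering (N : ℕ) (hN : 1 ≤ N)
    (V : Matrix (Fin N) (Fin N) ℂ) (hV : Vᴴ * V = 1)
    (lamf : Fin N → ℂ) (hdist : ∀ i j : Fin N, i ≠ j → lamf i ≠ lamf j)
    (Sf : Matrix (Fin N) (Fin N) ℂ) (hSf : Sf = Vᴴ * Matrix.diagonal lamf * V) :
    ∀ w : Fin N → ℂ, ∃ hf : ℕ → ℂ,
      Vᴴ * Matrix.diagonal w * V = ∑ l ∈ Finset.range N, hf l • Sf ^ l ∧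
      ∀ x : Fin N → ℂ,
        Vᴴ.mulVec ((Matrix.diagonal w).mulVec x) =
          (∑ l ∈ Finset.range N, hf l • Sf ^ l).mulVec (Vᴴ.mulVec x) := by
  intro w
  have hVVh : V * Vᴴ = 1 := _root_.mul_eq_one_comm.mp hV
  have hinj : Set.InjOn lamf (Finset.univ : Finset (Fin N)) := by
    intro i _ j _ h
    by_contra hij
    exact hdist i j hij h
  set p := Lagrange.interpolate (Finset.univ : Finset (Fin N)) lamf w with hp
  have hdeg : p.degree < (Finset.univ : Finset (Fin N)).card :=
    Lagrange.degree_interpolate_lt _ hinj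
  have hnat : p.natDegree < N := by
    rcases eq_or_ne p 0 with h0 | h0
    · rw [h0, Polynomial.natDegree_zero]; exact hN
    · exact (Polynomial.natDegree_lt_iff_degree_lt h0).mpr
        (by simpa [Finset.card_univ, Fintype.card_fin] using hdeg)
  have heval : ∀ i : Fin N, p.eval (lamf i) = w i := fun i =>
    Lagrange.eval_interpolate_at_node w hinj (Finset.mem_univ i)
  have hterm : ∀ l, p.coeff l • (Matrix.diagonal lamf) ^ l
      = Matrix.diagonal (fun i => p.coeff l * lamf i ^ l) := by
    intro l
    rw [Matrix.diagonal_pow, Matrix.smul_eq_diagonal_mul, Matrix.diagonal_mul_diagonal]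
    rfl
  have hdiag : Matrix.diagonal w =
      ∑ l ∈ Finset.range N, p.coeff l • (Matrix.diagonal lamf) ^ l := by
    simp only [hterm]
    ext i j
    rcases eq_or_ne i j with rfl | hij
    · simp only [Matrix.sum_apply, Matrix.diagonal_apply_eq]
      rw [← heval i, Polynomial.eval_eq_sum_range' hnat]
    · simp [Matrix.sum_apply, Matrix.diagonal_apply_ne _ hij]
  have hpow : ∀ l : ℕ, Sf ^ l = Vᴴ * (Matrix.diagonal lamf) ^ l * V := by
    intro l
    induction l with
    | zero => simpa using hV.symm
    | succ n ih =>
        rw [pow_succ, ih, hSf]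
        have : Vᴴ * Matrix.diagonal lamf ^ n * V * (Vᴴ * Matrix.diagonal lamf * V)
            = Vᴴ * Matrix.diagonal lamf ^ n * ((V * Vᴴ) * (Matrix.diagonal lamf * V)) := by
          noncomm_ring
        rw [this, hVVh, one_mul]
        noncomm_ring
  have hmain : Vᴴ * Matrix.diagonal w * V
      = ∑ l ∈ Finset.range N, p.coeff l • Sf ^ l := by
    rw [hdiag, Finset.mul_sum, Finset.sum_mul]
    refine Finset.sum_congr rfl fun l _ => ?_
    rw [hpow l, Matrix.mul_smul, Matrix.smul_mul]
  refine ⟨fun l => p.coeff l, hmain, ?_⟩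
  intro x
  have hkey : Vᴴ * Matrix.diagonal w = (Vᴴ * Matrix.diagonal w * V) * Vᴴ := by
    rw [Matrix.mul_assoc, hVVh, Matrix.mul_one]
  rw [Matrix.mulVec_mulVec, Matrix.mulVec_mulVec, hkey, hmain]
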